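/- For a commutative ring R, the map U ↦ M_n(R,U) is an order isomorphism between the set of reflexive-transitive ideal matrices {U : Fin n → Fin n → Ideal R | ∀ i, U i i = ⊤ ∧ ∀ i j k, U i j * U j k ≤ U i k} ordered entrywise, and the set of subrings of Matrix (Fin n) (Fin n) R containing all diagonal matrices, ordered by inclusion. -/

import Mathlib

open Matrix

section Aux

variable {R : Type*} [CommRing R] {n : ℕ}

lemma diag_single_eq (i : Fin n) (r : R) :
    Matrix.diagonal (Pi.single i r) = Matrix.single i i r := by
  ext k l
  by_cases h : k = l
  · subst h
    by_cases h2 : i = k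
    · subst h2; simp [Matrix.single]
    · simp [Matrix.single, Pi.single_apply, h2, Ne.symm h2]
  · rw [Matrix.diagonal_apply_ne _ h]
    simp only [Matrix.single, of_apply]
    rw [if_neg (by rintro ⟨rfl, rfl⟩; exact h rfl)]

def matSubring (U : Fin n → Fin n → Ideal R)
    (hd : ∀ i, U i i = ⊤) (hm : ∀ i j k, U i j * U j k ≤ U i k) :
    Subring (Matrix (Fin n) (Fin n) R) where
  carrier := {A | ∀ i j, A i j ∈ U i j}
  zero_mem' := fun i j => by simp
  one_mem' := fun i j => by
    by_cases h : i = j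
    · subst h; simp [hd i]
    · simp [Matrix.one_apply_ne h]
  add_mem' := fun ha hb i j => (U i j).add_mem (ha i j) (hb i j)
  neg_mem' := fun ha i j => (U i j).neg_mem (ha i j)
  mul_mem' := fun {A B} ha hb i j => by
    rw [Matrix.mul_apply]
    exact Ideal.sum_mem _ fun k _ => hm i k j (Ideal.mul_mem_mul (ha i k) (hb k j))

lemma diag_mem (U : Fin n → Fin n → Ideal R)
    (hd : ∀ i, U i i = ⊤) (hm : ∀ i j k, U i j * U j k ≤ U i k)
    (d : Fin n → R) : Matrix.diagonal d ∈ matSubring U hd hm := by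
  intro i j
  by_cases h : i = j
  · subst h; simp [hd i]
  · simp [Matrix.diagonal_apply_ne _ h]

def entryIdeal (S : Subring (Matrix (Fin n) (Fin n) R))
    (hS : ∀ d : Fin n → R, Matrix.diagonal d ∈ S) (i j : Fin n) : Ideal R where
  carrier := {r | Matrix.single i j r ∈ S}
  zero_mem' := by
    show Matrix.single i j (0 : R) ∈ S
    rw [Matrix.single_zero]
    exact S.zero_mem
  add_mem' := fun {a b} ha hb => by
    show Matrix.single i j (a + b) ∈ S
    rw [Matrix.single_add]
    exact S.add_mem ha hb
  smul_mem' := fun c x hx => by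
    have h : Matrix.single i j (c * x) =
        Matrix.diagonal (fun _ => c) * Matrix.single i j x := by
      ext k l
      simp [Matrix.diagonal_mul, Matrix.single, mul_ite]
    show Matrix.single i j (c • x) ∈ S
    rw [smul_eq_mul, h]
    exact S.mul_mem (hS _) hx

lemma entryIdeal_diag (S : Subring (Matrix (Fin n) (Fin n) R))
    (hS : ∀ d : Fin n → R, Matrix.diagonal d ∈ S) (i : Fin n) :
    entryIdeal S hS i i = ⊤ := by
  rw [Ideal.eq_top_iff_one]
  show Matrix.single i i (1 : R) ∈ S
  rw [← diag_single_eq]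
  exact hS _

lemma entryIdeal_mul (S : Subring (Matrix (Fin n) (Fin n) R))
    (hS : ∀ d : Fin n → R, Matrix.diagonal d ∈ S) (i j k : Fin n) :
    entryIdeal S hS i j * entryIdeal S hS j k ≤ entryIdeal S hS i k := by
  rw [Ideal.mul_le]
  intro a ha b hb
  show Matrix.single i k (a * b) ∈ S
  rw [← Matrix.single_mul_single_same (c := a) i j k b]
  exact S.mul_mem ha hb

lemma corner_eq (A : Matrix (Fin n) (Fin n) R) (i j : Fin n) :
    Matrix.single i i (1 : R) * A * Matrix.single j j 1 =
      Matrix.single i j (A i j) := by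
  ext k l
  simp [Matrix.mul_apply, Matrix.single, Finset.sum_ite_eq, ite_and,
    Finset.mul_sum, mul_ite, and_comm]
  aesop

lemma mem_matSubring_entryIdeal (S : Subring (Matrix (Fin n) (Fin n) R))
    (hS : ∀ d : Fin n → R, Matrix.diagonal d ∈ S) (A : Matrix (Fin n) (Fin n) R) :
    A ∈ S ↔ ∀ i j, Matrix.single i j (A i j) ∈ S := by
  constructor
  · intro hA i j
    have hei : Matrix.single i i (1 : R) ∈ S := by rw [← diag_single_eq]; exact hS _
    have hej : Matrix.single j j (1 : R) ∈ S := by rw [← diag_single_eq]; exact hS _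
    rw [← corner_eq]
    exact S.mul_mem (S.mul_mem hei hA) hej
  · intro h
    rw [matrix_eq_sum_single A]
    exact S.sum_mem fun i _ => S.sum_mem fun j _ => h i j

lemma std_mem_matSubring (U : Fin n → Fin n → Ideal R)
    (hd : ∀ i, U i i = ⊤) (hm : ∀ i j k, U i j * U j k ≤ U i k)
    {i j : Fin n} {r : R} (hr : r ∈ U i j) :
    Matrix.single i j r ∈ matSubring U hd hm := by
  intro k l
  by_cases hkl : i = k ∧ j = l
  · obtain ⟨rfl, rfl⟩ := hkl; simpa [Matrix.single] using hr
  · have : Matrix.single i j r k l = 0 := by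
      simp only [Matrix.single, of_apply]
      exact if_neg hkl
    rw [this]; exact (U k l).zero_mem

end Aux

theorem ideal_matrix_order_iso
    (R : Type*) [CommRing R] (n : ℕ) (hn : 1 ≤ n) :
    ∃ e : {U : Fin n → Fin n → Ideal R //
            (∀ i, U i i = ⊤) ∧ (∀ i j k, U i j * U j k ≤ U i k)} ≃o
          {S : Subring (Matrix (Fin n) (Fin n) R) //
            ∀ d : Fin n → R, Matrix.diagonal d ∈ S},
      ∀ U, ((e U : Subring (Matrix (Fin n) (Fin n) R)) :
              Set (Matrix (Fin n) (Fin n) R)) =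
            {A | ∀ i j, A i j ∈ U.1 i j} := by
  refine ⟨⟨⟨fun U => ⟨matSubring U.1 U.2.1 U.2.2, diag_mem _ _ _⟩,
      fun S => ⟨entryIdeal S.1 S.2, entryIdeal_diag _ _, entryIdeal_mul _ _⟩,
      ?_, ?_⟩, ?_⟩, fun U => rfl⟩
  · rintro ⟨U, hd, hm⟩
    refine Subtype.ext (funext fun i => funext fun j => ?_)
    ext r
    show Matrix.single i j r ∈ matSubring U hd hm ↔ r ∈ U i j
    constructor
    · intro h
      simpa [Matrix.single] using h i j
    · exact std_mem_matSubring U hd hm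
  · rintro ⟨S, hS⟩
    refine Subtype.ext (SetLike.ext fun A => ?_)
    exact (mem_matSubring_entryIdeal S hS A).symm
  · rintro ⟨U, hdU, hmU⟩ ⟨V, hdV, hmV⟩
    constructor
    · intro h i j r hr
      have h2 := h (std_mem_matSubring U hdU hmU hr)
      simpa [Matrix.single] using h2 i j
    · intro h A hA i j
      exact h i j (hA i j)
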